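/- For all a, b ∈ A and x < y in Γ, the identity (μ_x(a) − μ_y(α_{y−x}(a)))(μ_x(b) − μ_y(α_{y−x}(b))) = μ_x(ab) − μ_y(α_{y−x}(ab)) holds in ℓ∞(Γ, A). -/

import Mathlib

open scoped ENNReal

variable {Γ : Type*} [AddCommGroup Γ] [LinearOrder Γ] [IsOrderedAddMonoid Γ] {A : Type*} [NonUnitalCStarAlgebra A]

/-- The map `μ_x : A → ℓ∞(Γ, A)`, `(μ_x a)(y) = α_{y-x}(a)` for `y ≥ x` and `0` otherwise. -/
noncomputable def mu (α : Γ → (A →⋆ₙₐ[ℂ] A)) (x : Γ) (a : A) :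
    lp (fun _ : Γ => A) ∞ :=
  ⟨fun y => if x ≤ y then α (y - x) a else 0,
    memℓp_infty ⟨‖a‖, by
      rintro r ⟨y, rfl⟩
      dsimp only
      split_ifs
      · exact NonUnitalStarAlgHom.norm_apply_le _ _
      · simp⟩⟩
/-- For `a, b ∈ A` and `x < y` in `Γ`:
`(μ_x(a) - μ_y(α_{y-x}(a))) (μ_x(b) - μ_y(α_{y-x}(b))) = μ_x(ab) - μ_y(α_{y-x}(ab))`. -/
theorem mu_difference_product_identity
    {Γ : Type*} [AddCommGroup Γ] [LinearOrder Γ] [IsOrderedAddMonoid Γ] {A : Type*} [NonUnitalCStarAlgebra A]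
    (α : Γ → (A →⋆ₙₐ[ℂ] A))
    (hα0 : ∀ a : A, α 0 a = a)
    (hαadd : ∀ s t : Γ, 0 ≤ s → 0 ≤ t → ∀ a : A, α (s + t) a = α s (α t a))
    (x y : Γ) (hxy : x < y) (a b : A) :
    (mu α x a - mu α y (α (y - x) a)) * (mu α x b - mu α y (α (y - x) b)) =
      mu α x (a * b) - mu α y (α (y - x) (a * b)) := by
  ext z
  have key : ∀ c : A, (mu α x c - mu α y (α (y - x) c)) z =
      if x ≤ z ∧ ¬ y ≤ z then α (z - x) c else 0 := by
    intro c
    rw [lp.coeFn_sub]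
    simp only [Pi.sub_apply, mu]
    by_cases h1 : x ≤ z <;> by_cases h2 : y ≤ z
    · have h : z - x = (z - y) + (y - x) := by abel
      simp only [h1, h2, if_true, not_true, and_false, if_false]
      rw [h, hαadd _ _ (sub_nonneg.mpr h2) (sub_nonneg.mpr hxy.le), sub_self]
    · simp [h1, h2]
    · exact absurd (hxy.le.trans h2) h1
    · simp [h1, h2]
  rw [lp.infty_coeFn_mul, Pi.mul_apply, key, key, key]
  split_ifs <;> simp
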